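/- Let p be an odd prime and G a finite p-group whose center Z(G) requires exactly d generators (i.e., Z(G)/Z(G)^p has rank d as an F_p-vector space). Then every faithful permutation representation of G of minimal degree has exactly d orbits. In particular, if Z(G) is cyclic then a minimal faithful representation of G is transitive. -/

import Mathlib

/-- The minimal faithful permutation degree of a group: the least `n` such that
the group embeds into `Equiv.Perm (Fin n)`. -/
noncomputable def minFaithfulDegree (G : Type*) [Group G] : ℕ :=
  sInf {n : ℕ | ∃ f : G →* Equiv.Perm (Fin n), Function.Injective f}

namespace Johnson

open Subgroup MulAction

variable {G : Type*} [Group G]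

/-- The subgroup of central elements of order dividing `p`. -/
def omega (p : ℕ) (G : Type*) [Group G] : Subgroup G where
  carrier := {x | x ∈ Subgroup.center G ∧ x ^ p = 1}
  one_mem' := ⟨Subgroup.one_mem _, one_pow p⟩
  mul_mem' := by
    rintro a b ⟨ha, ha1⟩ ⟨hb, hb1⟩
    refine ⟨mul_mem ha hb, ?_⟩
    have hc : Commute a b := (Subgroup.mem_center_iff.mp ha b).symm
    rw [hc.mul_pow, ha1, hb1, mul_one]
  inv_mem' := by
    rintro a ⟨ha, ha1⟩
    exact ⟨inv_mem ha, by rw [inv_pow, ha1, inv_one]⟩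

lemma mem_omega {p : ℕ} {x : G} : x ∈ omega p G ↔ x ∈ Subgroup.center G ∧ x ^ p = 1 :=
  Iff.rfl

lemma omega_le_center (p : ℕ) : omega p G ≤ Subgroup.center G := fun _ hx => hx.1

lemma normal_of_le_center {H : Subgroup G} (h : H ≤ Subgroup.center G) : H.Normal := by
  constructor
  intro x hx g
  have := Subgroup.mem_center_iff.mp (h hx) g
  rw [this, mul_assoc, mul_inv_cancel, mul_one]
  exact hx

/-- In a `p`-group, from any nontrivial element we can extract a power which is a
nontrivial element of order dividing `p`. -/
lemma exists_pow_prime {p : ℕ} (hp : p.Prime) (hpG : IsPGroup p G) {x : G} (hx : x ≠ 1) :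
    ∃ k : ℕ, x ^ k ≠ 1 ∧ (x ^ k) ^ p = 1 := by
  haveI := Fact.mk hp
  obtain ⟨m, hm⟩ := IsPGroup.iff_orderOf.mp hpG x
  have hm0 : m ≠ 0 := by
    rintro rfl
    rw [pow_zero, orderOf_eq_one_iff] at hm
    exact hx hm
  refine ⟨p ^ (m - 1), ?_, ?_⟩
  · intro h
    have hdvd : orderOf x ∣ p ^ (m - 1) := orderOf_dvd_of_pow_eq_one h
    rw [hm, Nat.pow_dvd_pow_iff_le_right hp.one_lt] at hdvd
    omega
  · rw [← pow_mul, ← pow_succ]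
    have : m - 1 + 1 = m := Nat.succ_pred_eq_of_ne_zero hm0
    rw [this, ← hm, pow_orderOf_eq_one]

/-- A nontrivial normal subgroup of a finite `p`-group contains a nontrivial central
element of order dividing `p`. -/
lemma exists_omega_mem [Finite G] {p : ℕ} (hp : p.Prime) (hpG : IsPGroup p G)
    {N : Subgroup G} (hN : N.Normal) (hbot : N ≠ ⊥) :
    ∃ z : G, z ∈ N ∧ z ∈ omega p G ∧ z ≠ 1 := by
  haveI := Fact.mk hp
  -- find nontrivial element of N ∩ center
  have hpC : IsPGroup p (ConjAct G) := hpG.of_equiv ConjAct.toConjAct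
  have hNnontriv : Nontrivial N := (Subgroup.nontrivial_iff_ne_bot N).mpr hbot
  have hcard : p ∣ Nat.card N := by
    obtain ⟨k, hk0, hk⟩ := ((hpG.to_subgroup N).nontrivial_iff_card).mp hNnontriv
    rw [hk]
    exact dvd_pow_self p (Nat.pos_iff_ne_zero.mp hk0)
  have h1fix : (1 : N) ∈ MulAction.fixedPoints (ConjAct G) N := by
    intro g
    apply Subtype.ext
    rw [ConjAct.Subgroup.val_conj_smul]
    simp [ConjAct.smul_def]
  obtain ⟨b, hbfix, hb1⟩ :=
    hpC.exists_fixed_point_of_prime_dvd_card_of_fixed_point N hcard h1fix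
  have hbC : (b : G) ∈ Subgroup.center G := by
    rw [Subgroup.mem_center_iff]
    intro g
    have := hbfix (ConjAct.toConjAct g)
    have hval : g * (b : G) * g⁻¹ = (b : G) := by
      have := congrArg (Subtype.val) this
      rwa [ConjAct.Subgroup.val_conj_smul, ConjAct.smul_def, ConjAct.ofConjAct_toConjAct] at this
    calc g * (b : G) = g * (b : G) * g⁻¹ * g := by group
    _ = (b : G) * g := by rw [hval]
  have hbne : (b : G) ≠ 1 := by
    intro h
    exact hb1 (Subtype.ext h.symm)
  obtain ⟨k, hk1, hkp⟩ := exists_pow_prime hp hpG hbne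
  exact ⟨(b : G) ^ k, pow_mem b.2 k, ⟨pow_mem hbC k, hkp⟩, hk1⟩

lemma minDeg_le [Finite G] {ι : Type} [Fintype ι] (K : ι → Subgroup G)
    (hker : ∀ g : G, (∀ (i : ι) (x : G ⧸ K i), g • x = x) → g = 1) :
    minFaithfulDegree G ≤ ∑ i, (K i).index := by
  classical
  cases nonempty_fintype G
  letI : ∀ i, Fintype (G ⧸ K i) := fun i => Fintype.ofFinite _
  have hcard : Fintype.card (Σ i, G ⧸ K i) = ∑ i, (K i).index := by
    rw [Fintype.card_sigma]
    refine Finset.sum_congr rfl fun i _ => ?_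
    rw [Subgroup.index, Nat.card_eq_fintype_card]
  let e := Fintype.equivFinOfCardEq hcard
  let ψ : G →* Equiv.Perm (Σ i, G ⧸ K i) :=
    { toFun := fun g => Equiv.sigmaCongrRight (fun i => MulAction.toPerm g)
      map_one' := Equiv.ext fun y => by
        obtain ⟨i, x⟩ := y
        simp [Equiv.sigmaCongrRight_apply]
      map_mul' := fun g h => Equiv.ext fun y => by
        obtain ⟨i, x⟩ := y
        simp [Equiv.sigmaCongrRight_apply, mul_smul] }
  let μ : Equiv.Perm (Σ i, G ⧸ K i) ≃* Equiv.Perm (Fin (∑ i, (K i).index)) :=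
    { e.permCongr with
      map_mul' := fun σ τ => Equiv.ext fun x => by
        simp [Equiv.permCongr_apply] }
  let f : G →* Equiv.Perm (Fin (∑ i, (K i).index)) := μ.toMonoidHom.comp ψ
  have hinj : Function.Injective f := by
    rw [injective_iff_map_eq_one]
    intro g hg
    apply hker
    intro i x
    have hψ : ψ g = 1 := by
      have : μ (ψ g) = μ 1 := by rw [map_one]; exact hg
      exact μ.injective this
    have h2 : (⟨i, g • x⟩ : Σ i, G ⧸ K i) = ⟨i, x⟩ := by
      have := congrArg (fun σ => σ ⟨i, x⟩) hψ
      simpa [ψ, Equiv.sigmaCongrRight_apply] using this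
    simpa using h2
  exact Nat.sInf_le ⟨f, hinj⟩


open Pointwise

/-- Structure theory of finite elementary abelian `p`-groups: cardinality is `p ^ r`,
any generating set has at least `r` elements, and some generating family has `r` elements. -/
lemma elem_abelian {B : Type*} [CommGroup B] [Finite B] {p : ℕ} (hp : p.Prime)
    (hpow : ∀ b : B, b ^ p = 1) :
    ∃ r : ℕ, Nat.card B = p ^ r ∧
      (∀ S : Finset B, Subgroup.closure (S : Set B) = ⊤ → r ≤ S.card) ∧
      ∃ g : Fin r → B, Subgroup.closure (Set.range g) = ⊤ := by
  classical
  haveI := Fact.mk hp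
  haveI : Module (ZMod p) (Additive B) := AddCommGroup.zmodModule (by
    intro x
    show p • x = 0
    have h : (Additive.toMul x) ^ p = 1 := hpow _
    calc p • x = Additive.ofMul ((Additive.toMul x) ^ p) := by rw [ofMul_pow]; rfl
    _ = 0 := by rw [h]; rfl)
  haveI : Fintype (Additive B) := Fintype.ofFinite _
  haveI : Module.Finite (ZMod p) (Additive B) := Module.Finite.of_finite
  have hsmul_val : ∀ (c : ZMod p) (x : Additive B), c • x = c.val • x := by
    intro c x
    rw [← Nat.cast_smul_eq_nsmul (ZMod p), ZMod.natCast_val, ZMod.cast_id]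
  refine ⟨Module.finrank (ZMod p) (Additive B), ?_, ?_, ?_⟩
  · have : Nat.card B = Nat.card (Additive B) := Nat.card_congr Additive.ofMul
    rw [this, Nat.card_eq_fintype_card]
    have := Module.card_eq_pow_finrank (K := ZMod p) (V := Additive B)
    rwa [ZMod.card] at this
  · -- any generating finset has at least r elements
    intro S hS
    set T : Finset (Additive B) := S.image Additive.ofMul with hTdef
    have hspan : Submodule.span (ZMod p) (T : Set (Additive B)) = ⊤ := by
      rw [Submodule.eq_top_iff']
      intro x
      have hx : (Additive.toMul x) ∈ Subgroup.closure (S : Set B) := hS ▸ Subgroup.mem_top _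
      set W : Submodule (ZMod p) (Additive B) := Submodule.span (ZMod p) (T : Set (Additive B))
        with hWdef
      have hle : Subgroup.closure (S : Set B) ≤
          { carrier := {b : B | Additive.ofMul b ∈ W}
            one_mem' := by exact W.zero_mem
            mul_mem' := fun ha hb => by exact W.add_mem ha hb
            inv_mem' := fun ha => by exact W.neg_mem ha } := by
        rw [Subgroup.closure_le]
        intro b hb
        show Additive.ofMul b ∈ W
        refine Submodule.subset_span ?_
        exact Finset.mem_coe.mpr (Finset.mem_image_of_mem _ hb)
      exact hle hx
    have hfr := finrank_span_le_card (R := ZMod p) (T : Set (Additive B))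
    rw [hspan] at hfr
    calc Module.finrank (ZMod p) (Additive B)
        = Module.finrank (ZMod p) (⊤ : Submodule (ZMod p) (Additive B)) := (finrank_top _ _).symm
      _ ≤ (T : Set (Additive B)).toFinset.card := hfr
      _ = T.card := by rw [Finset.toFinset_coe]
      _ ≤ S.card := Finset.card_image_le
  · -- a generating family of size r
    let b := Module.finBasis (ZMod p) (Additive B)
    refine ⟨fun i => Additive.toMul (b i), ?_⟩
    rw [eq_top_iff]
    intro x _
    have hx : Additive.ofMul x ∈ Submodule.span (ZMod p) (Set.range ⇑b) := by
      rw [b.span_eq]; trivial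
    set C : Subgroup B := Subgroup.closure (Set.range fun i => Additive.toMul (b i)) with hCdef
    let C' : Submodule (ZMod p) (Additive B) :=
      { carrier := {v : Additive B | Additive.toMul v ∈ C}
        add_mem' := by
          intro a b ha hb
          show Additive.toMul (a + b) ∈ C
          exact mul_mem ha hb
        zero_mem' := by
          show Additive.toMul (0 : Additive B) ∈ C
          exact one_mem C
        smul_mem' := by
          intro c x hx
          rw [hsmul_val]
          show Additive.toMul ((c.val : ℕ) • x) ∈ C
          rw [toMul_nsmul]
          exact pow_mem hx _ }
    have hbC : Set.range ⇑b ⊆ C' := by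
      rintro _ ⟨i, rfl⟩
      show Additive.toMul (b i) ∈ C
      exact Subgroup.subset_closure ⟨i, rfl⟩
    exact Submodule.span_le.mpr hbC hx


lemma card_ker_pow {A : Type*} [CommGroup A] [Finite A] {p : ℕ} (hp : p.Prime)
    (hpA : IsPGroup p A) :
    Nat.card (powMonoidHom p : A →* A).ker = p ^ Group.rank A := by
  classical
  haveI := Fact.mk hp
  set φ : A →* A := powMonoidHom p with hφ
  set R : Subgroup A := φ.range with hR
  have step1 : Nat.card φ.ker = Nat.card (A ⧸ R) := by
    have e1 : Nat.card (A ⧸ φ.ker) = Nat.card R :=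
      Nat.card_congr (QuotientGroup.quotientKerEquivRange φ).toEquiv
    have h1 := Subgroup.card_eq_card_quotient_mul_card_subgroup φ.ker
    have h2 := Subgroup.card_eq_card_quotient_mul_card_subgroup R
    have hRpos : 0 < Nat.card R := Nat.card_pos
    rw [e1] at h1
    rw [h1] at h2
    exact (Nat.eq_of_mul_eq_mul_left hRpos
      (by linarith [mul_comm (Nat.card R) (Nat.card φ.ker),
        mul_comm (Nat.card (A ⧸ R)) (Nat.card R)])).symm
  have hpow1 : ∀ q : A ⧸ R, q ^ p = 1 := by
    intro q
    obtain ⟨a, ha⟩ := QuotientGroup.mk'_surjective R q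
    rw [← ha, ← map_pow, QuotientGroup.mk'_apply, QuotientGroup.eq_one_iff]
    exact ⟨a, rfl⟩
  obtain ⟨r, hcard, hmin, g, hg⟩ := elem_abelian hp hpow1
  rw [step1, hcard]
  congr 1
  -- now show r = Group.rank A
  have hrank_le : Group.rank A ≤ r := by
    choose f hf using fun i : Fin r => QuotientGroup.mk'_surjective R (g i)
    set H : Subgroup A := Subgroup.closure (Set.range f) with hHdef
    have himg : Subgroup.map (QuotientGroup.mk' R) H = ⊤ := by
      rw [hHdef, MonoidHom.map_closure, ← Set.range_comp]
      have hrange : Set.range ((QuotientGroup.mk' R) ∘ f) = Set.range g := by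
        ext q; constructor
        · rintro ⟨i, rfl⟩; exact ⟨i, (hf i).symm⟩
        · rintro ⟨i, rfl⟩; exact ⟨i, hf i⟩
      rw [hrange, hg]
    have hsup : H ⊔ R = ⊤ := by
      have := Subgroup.comap_map_eq (QuotientGroup.mk' R) H
      rw [himg, QuotientGroup.ker_mk'] at this
      rw [← this]
      simp
    have hH : H = ⊤ := by
      by_contra hne
      haveI : H.Normal := Subgroup.normal_of_comm H
      have hCp : IsPGroup p (A ⧸ H) := IsPGroup.to_quotient hpA H
      have hsurjC : Function.Surjective (powMonoidHom p : A ⧸ H →* A ⧸ H) := by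
        intro x
        obtain ⟨a, ha⟩ := QuotientGroup.mk'_surjective H x
        have hatop : a ∈ (H : Set A) * (R : Set A) := by
          rw [← Subgroup.mul_normal H R]
          exact hsup ▸ Subgroup.mem_top a
        obtain ⟨h, hh, rr, hrr, hprod⟩ := hatop
        obtain ⟨w, hw⟩ := hrr
        refine ⟨QuotientGroup.mk' H w, ?_⟩
        have heq1 : QuotientGroup.mk' H rr = x := by
          rw [← ha, ← hprod, map_mul]
          have h1 : QuotientGroup.mk' H h = 1 := (QuotientGroup.eq_one_iff h).mpr hh
          rw [h1, one_mul]
        have : φ w = rr := hw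
        rw [← heq1, ← this, hφ]
        show (QuotientGroup.mk' H w) ^ p = QuotientGroup.mk' H (w ^ p)
        rw [map_pow]
      have hinjC : Function.Injective (powMonoidHom p : A ⧸ H →* A ⧸ H) :=
        Finite.injective_iff_surjective.mpr hsurjC
      have hCnontriv : ∃ c : A ⧸ H, c ≠ 1 := by
        by_contra hno
        push_neg at hno
        apply hne
        rw [eq_top_iff]
        intro a _
        exact (QuotientGroup.eq_one_iff a).mp (hno (QuotientGroup.mk' H a))
      obtain ⟨c, hc⟩ := hCnontriv
      obtain ⟨k, hk1, hkp⟩ := exists_pow_prime hp hCp hc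
      apply hk1
      apply hinjC
      rw [map_one]
      exact hkp
    have hSclosure : Subgroup.closure ((Finset.image f Finset.univ : Finset A) : Set A) = ⊤ := by
      rw [Finset.coe_image, Finset.coe_univ, Set.image_univ, ← hHdef]
      exact hH
    exact le_trans (Group.rank_le hSclosure) (le_trans Finset.card_image_le (by simp))
  have hle_rank : r ≤ Group.rank A := by
    obtain ⟨S, hScard, hSclosure⟩ := Group.rank_spec A
    have hT : Subgroup.closure ((S.image (QuotientGroup.mk' R) : Finset (A ⧸ R)) : Set (A ⧸ R)) = ⊤ := by
      rw [Finset.coe_image, ← MonoidHom.map_closure, hSclosure]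
      exact Subgroup.map_top_of_surjective _ (QuotientGroup.mk'_surjective R)
    exact le_trans (hmin _ hT) (le_trans Finset.card_image_le (le_of_eq hScard))
  omega


lemma card_omega [Finite G] {p : ℕ} (hp : p.Prime) (hpG : IsPGroup p G) :
    Nat.card (omega p G) = p ^ Group.rank (Subgroup.center G) := by
  classical
  have hpZ : IsPGroup p (Subgroup.center G) := hpG.to_subgroup _
  letI : CommGroup (Subgroup.center G) :=
    { (Subgroup.center G).toGroup with
      mul_comm := fun a b => Subtype.ext (Subgroup.mem_center_iff.mp b.2 a) }
  have key := card_ker_pow (A := Subgroup.center G) hp hpZ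
  have heq : omega p G = Subgroup.map (Subgroup.center G).subtype
      (powMonoidHom p : _ →* _).ker := by
    ext x
    simp only [Subgroup.mem_map, MonoidHom.mem_ker, mem_omega]
    constructor
    · rintro ⟨hx, hxp⟩
      refine ⟨⟨x, hx⟩, ?_, rfl⟩
      show (⟨x, hx⟩ : Subgroup.center G) ^ p = 1
      ext
      simpa using hxp
    · rintro ⟨⟨y, hy⟩, hyker, rfl⟩
      refine ⟨hy, ?_⟩
      have : ((⟨y, hy⟩ : Subgroup.center G) ^ p : Subgroup.center G) = 1 := hyker
      have := congrArg (Subtype.val) this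
      simpa using this
  rw [heq, ← key]
  exact (Nat.card_congr (Subgroup.equivMapOfInjective _ _
    (Subgroup.center G).subtype_injective).toEquiv).symm

lemma normal_of_le_center' {H : Subgroup G} (h : H ≤ Subgroup.center G) : H.Normal := by
  constructor
  intro x hx g
  have := Subgroup.mem_center_iff.mp (h hx) g
  rw [this, mul_assoc, mul_inv_cancel, mul_one]
  exact hx

/-- If `Mi ≤ Ω` has index at least `p²` in the central elementary abelian subgroup `Ω`,
there are two strictly intermediate subgroups intersecting in `Mi`. -/
lemma exists_intermediate [Finite G] {p : ℕ} (hp : p.Prime) {Ω Mi : Subgroup G}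
    (hM : Mi ≤ Ω) (hΩc : Ω ≤ Subgroup.center G) (hpow : ∀ x ∈ Ω, x ^ p = 1)
    (hcard : Nat.card Mi * (p * p) ≤ Nat.card Ω) :
    ∃ W₁ W₂ : Subgroup G, Mi < W₁ ∧ Mi < W₂ ∧ W₁ ≤ Ω ∧ W₂ ≤ Ω ∧ W₁ ⊓ W₂ = Mi := by
  classical
  have hMpos : 0 < Nat.card Mi := Nat.card_pos
  have hppos : 0 < p := hp.pos
  -- Mi < Ω
  have hlt : Mi < Ω := by
    refine lt_of_le_of_ne hM ?_
    intro h
    rw [h] at hcard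
    have h4 : 4 ≤ p * p := Nat.mul_le_mul hp.two_le hp.two_le
    have h5 : 0 < Nat.card Ω := Nat.card_pos
    nlinarith
  obtain ⟨u, huΩ, huM⟩ := SetLike.exists_of_lt hlt
  have huc : Subgroup.zpowers u ≤ Subgroup.center G := by
    rw [Subgroup.zpowers_le]
    exact hΩc huΩ
  haveI hunormal : (Subgroup.zpowers u).Normal := normal_of_le_center' huc
  set W₁ : Subgroup G := Mi ⊔ Subgroup.zpowers u with hW₁def
  have hled : ∀ w : G, w ∈ Ω → ∀ (W : Subgroup G), W = Mi ⊔ Subgroup.zpowers w →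
      (Subgroup.zpowers w).Normal → W ≤ Ω ∧ Nat.card W ≤ Nat.card Mi * p := by
    intro w hwΩ W hWdef hnormal
    constructor
    · rw [hWdef]
      exact sup_le hM (Subgroup.zpowers_le.mpr hwΩ)
    · have hset : (W : Set G) = (Mi : Set G) * (Subgroup.zpowers w : Set G) := by
        rw [hWdef]
        exact Subgroup.mul_normal Mi (Subgroup.zpowers w)
      have h1 : Nat.card W = Nat.card ((Mi : Set G) * (Subgroup.zpowers w : Set G) : Set G) := by
        rw [← hset]; rfl
      have h2 := Set.natCard_mul_le (s := (Mi : Set G)) (t := (Subgroup.zpowers w : Set G))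
      have h3 : Nat.card (Subgroup.zpowers w) = orderOf w := Nat.card_zpowers w
      have h4 : orderOf w ≤ p :=
        Nat.le_of_dvd hppos (orderOf_dvd_of_pow_eq_one (hpow w hwΩ))
      have h5 : Nat.card ((Mi : Set G) : Type _) = Nat.card Mi := rfl
      calc Nat.card W ≤ Nat.card ((Mi : Set G) : Type _) *
            Nat.card ((Subgroup.zpowers w : Set G) : Type _) := h1 ▸ h2
        _ = Nat.card Mi * orderOf w := by rw [h5]; congr 1
        _ ≤ Nat.card Mi * p := Nat.mul_le_mul_left _ h4
  obtain ⟨hW₁Ω, hW₁card⟩ := hled u huΩ W₁ hW₁def hunormal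
  -- W₁ < Ω
  have hW₁lt : W₁ < Ω := by
    refine lt_of_le_of_ne hW₁Ω ?_
    intro h
    rw [← h] at hcard
    have : Nat.card Mi * (p * p) ≤ Nat.card Mi * p := le_trans hcard hW₁card
    have := Nat.le_of_mul_le_mul_left this hMpos
    nlinarith [hp.two_le]
  obtain ⟨v, hvΩ, hvW₁⟩ := SetLike.exists_of_lt hW₁lt
  have hvc : Subgroup.zpowers v ≤ Subgroup.center G := by
    rw [Subgroup.zpowers_le]; exact hΩc hvΩ
  haveI hvnormal : (Subgroup.zpowers v).Normal := normal_of_le_center' hvc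
  set W₂ : Subgroup G := Mi ⊔ Subgroup.zpowers v with hW₂def
  obtain ⟨hW₂Ω, _⟩ := hled v hvΩ W₂ hW₂def hvnormal
  have huW₁ : u ∈ W₁ := by
    rw [hW₁def]
    exact Subgroup.mem_sup_right (Subgroup.mem_zpowers u)
  have hvM : v ∉ Mi := fun h => hvW₁ (by rw [hW₁def]; exact Subgroup.mem_sup_left h)
  have hvpow : v ^ p = 1 := hpow v hvΩ
  -- key claim : powers of v in W₁ are trivial
  have hvk : ∀ k : ℤ, v ^ k ∈ W₁ → v ^ k = 1 := by
    intro k hk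
    by_cases hdvd : (p : ℤ) ∣ k
    · obtain ⟨t, rfl⟩ := hdvd
      rw [zpow_mul, zpow_natCast, hvpow, one_zpow]
    · exfalso
      apply hvW₁
      have hnd : ¬ p ∣ k.natAbs := by
        intro h
        exact hdvd (dvd_trans (Int.natCast_dvd_natCast.mpr h) (Int.natAbs_dvd.mpr dvd_rfl))
      have hcop : IsCoprime (k : ℤ) (p : ℤ) := by
        rw [Int.isCoprime_iff_gcd_eq_one]
        show Int.gcd k p = 1
        have : Int.gcd k p = Nat.gcd k.natAbs p := by
          simp [Int.gcd, Int.natAbs_natCast]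
        rw [this]
        exact Nat.coprime_comm.mp ((hp.coprime_iff_not_dvd).mpr hnd)
      obtain ⟨a, b, hab⟩ := hcop
      have : v = (v ^ k) ^ a * (v ^ (p : ℤ)) ^ b := by
        rw [← zpow_mul, ← zpow_mul, ← zpow_add, mul_comm k a, mul_comm (p : ℤ) b]
        rw [hab, zpow_one]
      rw [this]
      exact Subgroup.mul_mem _ (Subgroup.zpow_mem _ hk a)
        (by rw [zpow_natCast, hvpow, one_zpow]; exact Subgroup.one_mem _)
  have hW12 : W₁ ⊓ W₂ = Mi := by
    apply le_antisymm
    · intro x hx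
      obtain ⟨hx1, hx2⟩ := Subgroup.mem_inf.mp hx
      have hx2' : x ∈ (Mi : Set G) * (Subgroup.zpowers v : Set G) := by
        rw [← Subgroup.mul_normal Mi (Subgroup.zpowers v)]
        exact hx2
      obtain ⟨m, hm, w, hw, rfl⟩ := hx2'
      obtain ⟨k, hk⟩ := Subgroup.mem_zpowers_iff.mp hw
      subst hk
      have hwW₁ : v ^ k ∈ W₁ := by
        have heq : v ^ k = m⁻¹ * (m * v ^ k) := by group
        rw [heq]
        exact Subgroup.mul_mem _ (Subgroup.inv_mem _ (Subgroup.mem_sup_left hm)) hx1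
      have h1 : m * v ^ k = m := by rw [hvk k hwW₁, mul_one]
      show m * v ^ k ∈ Mi
      rw [h1]
      exact hm
    · exact le_inf (le_sup_left) (le_sup_left)
  -- strictness
  have hMW₁ : Mi < W₁ := by
    refine lt_of_le_of_ne le_sup_left ?_
    intro h
    exact huM (h ▸ huW₁)
  have hMW₂ : Mi < W₂ := by
    refine lt_of_le_of_ne le_sup_left ?_
    intro h
    exact hvM (h ▸ Subgroup.mem_sup_right (Subgroup.mem_zpowers v))
  exact ⟨W₁, W₂, hMW₁, hMW₂, hW₁Ω, hW₂Ω, hW12⟩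


end Johnson

open Johnson Pointwise in
theorem johnson_orbit_count (p : ℕ) (hp : p.Prime) (hodd : Odd p)
    (G : Type*) [Group G] [Finite G] (hpG : IsPGroup p G)
    (d : ℕ) (hd : Group.rank (Subgroup.center G) = d)
    (n : ℕ) (hn : n = minFaithfulDegree G)
    [MulAction G (Fin n)] [FaithfulSMul G (Fin n)] :
    Nat.card (Quotient (MulAction.orbitRel G (Fin n))) = d ∧
    (IsCyclic (Subgroup.center G) → MulAction.IsPretransitive G (Fin n)) := by
  classical
  haveI := Fact.mk hp
  set Ω : Subgroup G := Johnson.omega p G with hΩdef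
  have hcardΩ : Nat.card Ω = p ^ d := by rw [hΩdef, Johnson.card_omega hp hpG, hd]
  set ι := Quotient (MulAction.orbitRel G (Fin n)) with hιdef
  haveI : Fintype ι := Fintype.ofFinite _
  set H : ι → Subgroup G := fun o => MulAction.stabilizer G o.out with hHdef
  set M : ι → Subgroup G := fun o => Ω ⊓ H o with hMdef
  have hMle : ∀ o, M o ≤ Ω := fun o => inf_le_left
  have hcenter : ∀ z ∈ Ω, ∀ g : G, g * z = z * g := by
    intro z hz g
    exact Subgroup.mem_center_iff.mp (Johnson.omega_le_center p hz) g
  -- class formula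
  have hsum : n = ∑ o : ι, (H o).index := by
    letI : ∀ o : ι, Fintype (G ⧸ H o) := fun o => Fintype.ofFinite _
    have e := MulAction.selfEquivSigmaOrbitsQuotientStabilizer G (Fin n)
    have hc := Fintype.card_congr e
    rw [Fintype.card_fin, Fintype.card_sigma] at hc
    rw [hc]
    exact Finset.sum_congr rfl fun o _ => by rw [Subgroup.index, Nat.card_eq_fintype_card]
  -- faithfulness gives trivial intersection
  have hMbot : (⨅ o : ι, M o) = ⊥ := by
    rw [eq_bot_iff]
    intro z hz
    rw [Subgroup.mem_iInf] at hz
    rw [Subgroup.mem_bot]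
    by_cases hne : Nonempty (Fin n)
    · obtain ⟨x0⟩ := hne
      have hzΩ : z ∈ Ω :=
        (Subgroup.mem_inf.mp (hz (Quotient.mk (MulAction.orbitRel G (Fin n)) x0))).1
      refine eq_of_smul_eq_smul (α := Fin n) (fun x => ?_)
      set o : ι := Quotient.mk (MulAction.orbitRel G (Fin n)) x with hodef
      have hrel := Quotient.mk_out (s := MulAction.orbitRel G (Fin n)) x
      rw [MulAction.orbitRel_apply, MulAction.mem_orbit_iff] at hrel
      obtain ⟨g, hg⟩ := hrel
      have hstab : z • o.out = o.out :=
        MulAction.mem_stabilizer_iff.mp (Subgroup.mem_inf.mp (hz o)).2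
      have hxx : g⁻¹ • o.out = x := by rw [← hg, inv_smul_smul]
      have : z • x = x := by
        calc z • x = z • (g⁻¹ • o.out) := by rw [hxx]
        _ = (z * g⁻¹) • o.out := by rw [mul_smul]
        _ = (g⁻¹ * z) • o.out := by rw [hcenter z hzΩ g⁻¹]
        _ = g⁻¹ • (z • o.out) := by rw [mul_smul]
        _ = g⁻¹ • o.out := by rw [hstab]
        _ = x := hxx
      rw [this, one_smul]
    · rw [not_nonempty_iff] at hne
      haveI : Subsingleton G :=
        ⟨fun a b => eq_of_smul_eq_smul (α := Fin n) (fun x => hne.elim x)⟩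
      exact Subsingleton.elim z 1
  -- each orbit is essential
  have hE : ∀ i₀ : ι, Ω ⊓ (⨅ j : {j : ι // j ≠ i₀}, M j.1) ≠ ⊥ := by
    intro i₀ hcon
    have hker : ∀ g : G, (∀ (j : {j : ι // j ≠ i₀}) (x : G ⧸ H j.1), g • x = x) → g = 1 := by
      intro g hg
      have hNnormal : (⨅ j : {j : ι // j ≠ i₀}, (H j.1).normalCore).Normal := by
        constructor
        intro x hx gg
        rw [Subgroup.mem_iInf] at hx ⊢
        intro j
        exact ((H j.1).normalCore_normal).conj_mem x (hx j) gg
      have hgN : g ∈ ⨅ j : {j : ι // j ≠ i₀}, (H j.1).normalCore := by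
        rw [Subgroup.mem_iInf]
        intro j
        rw [Subgroup.normalCore_eq_ker]
        show MulAction.toPermHom G (G ⧸ H j.1) g = 1
        apply Equiv.ext
        intro x
        simpa using hg j x
      have hNbot : (⨅ j : {j : ι // j ≠ i₀}, (H j.1).normalCore) = ⊥ := by
        by_contra hne
        obtain ⟨z, hzN, hzΩ, hz1⟩ := Johnson.exists_omega_mem hp hpG hNnormal hne
        apply hz1
        have hmem : z ∈ Ω ⊓ ⨅ j : {j : ι // j ≠ i₀}, M j.1 := by
          refine Subgroup.mem_inf.mpr ⟨hzΩ, ?_⟩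
          rw [Subgroup.mem_iInf]
          intro j
          exact Subgroup.mem_inf.mpr
            ⟨hzΩ, (H j.1).normalCore_le ((Subgroup.mem_iInf.mp hzN) j)⟩
        rw [hcon] at hmem
        exact Subgroup.mem_bot.mp hmem
      rw [hNbot] at hgN
      exact Subgroup.mem_bot.mp hgN
    have hle := Johnson.minDeg_le (fun j : {j : ι // j ≠ i₀} => H j.1) hker
    have hsub : ∑ j : {j : ι // j ≠ i₀}, (H j.1).index
        = ∑ j ∈ Finset.univ.erase i₀, (H j).index := by
      exact (Finset.sum_subtype (Finset.univ.erase i₀)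
        (fun x => by simp [Finset.mem_erase]) (fun j => (H j).index)).symm
    have htot : ∑ j ∈ Finset.univ.erase i₀, (H j).index + (H i₀).index = ∑ j : ι, (H j).index :=
      Finset.sum_erase_add _ _ (Finset.mem_univ i₀)
    have hpos : (H i₀).index ≠ 0 := Subgroup.index_ne_zero_of_finite
    rw [hsub] at hle
    rw [← hn] at hle
    omega
  -- subgroup equality from inclusion plus cardinality
  have heqcard : ∀ (A B : Subgroup G), A ≤ B → Nat.card B ≤ Nat.card A → A = B := by
    intro A B hAB hc
    have h1 : (B : Set G).ncard ≤ (A : Set G).ncard := by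
      rw [← Nat.card_coe_set_eq, ← Nat.card_coe_set_eq]
      exact hc
    exact SetLike.coe_injective (Set.eq_of_subset_of_ncard_le hAB h1 (Set.toFinite _))
  have hΩpow : ∀ x ∈ Ω, x ^ p = 1 := fun x hx => (Johnson.mem_omega.mp hx).2
  have hΩc : Ω ≤ Subgroup.center G := Johnson.omega_le_center p
  obtain ⟨s, hcardG⟩ := IsPGroup.iff_card.mp hpG
  have hp3 : 3 ≤ p := by
    obtain ⟨m, hm⟩ := hodd
    have := hp.two_le
    omega
  -- every M i₀ has relative index at most p in Ω
  have hrel : ∀ i₀ : ι, (M i₀).relIndex Ω ≤ p := by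
    intro i₀
    by_contra hgt
    push_neg at hgt
    have hcardrel : Nat.card (M i₀) * (M i₀).relIndex Ω = Nat.card Ω := by
      have h := Subgroup.relIndex_mul_relIndex ⊥ (M i₀) Ω bot_le (hMle i₀)
      rwa [Subgroup.relIndex_bot_left, Subgroup.relIndex_bot_left] at h
    have hdvd : (M i₀).relIndex Ω ∣ p ^ d := by
      rw [← hcardΩ, ← hcardrel]
      exact dvd_mul_left _ _
    obtain ⟨k, hkle, hkeq⟩ := (Nat.dvd_prime_pow hp).mp hdvd
    have hk2 : p * p ≤ (M i₀).relIndex Ω := by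
      have hk2' : 2 ≤ k := by
        rcases Nat.lt_or_ge k 2 with hlt2 | hge
        · exfalso
          interval_cases k
          · rw [hkeq, pow_zero] at hgt; omega
          · rw [hkeq, pow_one] at hgt; omega
        · exact hge
      calc p * p = p ^ 2 := by ring
        _ ≤ p ^ k := Nat.pow_le_pow_right hp.pos hk2'
        _ = _ := hkeq.symm
    have hbound : Nat.card (M i₀) * (p * p) ≤ Nat.card Ω := by
      rw [← hcardrel]
      exact Nat.mul_le_mul_left _ hk2
    obtain ⟨W₁, W₂, hMW₁, hMW₂, hW₁Ω, hW₂Ω, hW12⟩ :=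
      Johnson.exists_intermediate hp (hMle i₀) hΩc hΩpow hbound
    -- Dedekind identity
    have hded : ∀ W : Subgroup G, M i₀ ≤ W → W ≤ Ω → Ω ⊓ (H i₀ ⊔ W) = W := by
      intro W hMW hWΩ
      haveI : W.Normal := Johnson.normal_of_le_center' (le_trans hWΩ hΩc)
      apply le_antisymm
      · intro x hx
        obtain ⟨hxΩ, hxK⟩ := Subgroup.mem_inf.mp hx
        have hx' : x ∈ (H i₀ : Set G) * (W : Set G) := by
          rw [← Subgroup.mul_normal]
          exact hxK
        obtain ⟨h, hh, w, hw, rfl⟩ := hx'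
        have hhΩ : h ∈ Ω := by
          have heq : h = (h * w) * w⁻¹ := by group
          rw [heq]
          exact Subgroup.mul_mem _ hxΩ (Subgroup.inv_mem _ (hWΩ hw))
        have hhM : h ∈ M i₀ := Subgroup.mem_inf.mpr ⟨hhΩ, hh⟩
        exact Subgroup.mul_mem _ (hMW hhM) hw
      · exact le_inf hWΩ le_sup_right
    -- index estimate for enlarged subgroups
    have hidx : ∀ W : Subgroup G, M i₀ < W → W ≤ Ω →
        (H i₀ ⊔ W).index * p ≤ (H i₀).index := by
      intro W hMW hWΩ
      have hHle : H i₀ ≤ H i₀ ⊔ W := le_sup_left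
      have hmul := Subgroup.relIndex_mul_index hHle
      have hrelne : (H i₀).relIndex (H i₀ ⊔ W) ≠ 1 := by
        intro h1
        have hle2 := Subgroup.relIndex_eq_one.mp h1
        obtain ⟨t, htW, htM⟩ := SetLike.exists_of_lt hMW
        have htH : t ∈ H i₀ := hle2 (Subgroup.mem_sup_right htW)
        exact htM (Subgroup.mem_inf.mpr ⟨hWΩ htW, htH⟩)
      have hreldvd : (H i₀).relIndex (H i₀ ⊔ W) ∣ p ^ s := by
        have h1 : (H i₀).relIndex (H i₀ ⊔ W) ∣ (H i₀).index :=
          ⟨(H i₀ ⊔ W).index, hmul.symm⟩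
        have h2 : (H i₀).index ∣ Nat.card G := ⟨Nat.card (H i₀), (Subgroup.index_mul_card _).symm⟩
        rw [← hcardG]
        exact dvd_trans h1 h2
      obtain ⟨t, htle, hteq⟩ := (Nat.dvd_prime_pow hp).mp hreldvd
      have hp_le : p ≤ (H i₀).relIndex (H i₀ ⊔ W) := by
        rcases Nat.eq_zero_or_pos t with rfl | ht
        · rw [hteq, pow_zero] at hrelne; omega
        · calc p = p ^ 1 := (pow_one p).symm
            _ ≤ p ^ t := Nat.pow_le_pow_right hp.pos ht
            _ = _ := hteq.symm
      calc (H i₀ ⊔ W).index * p = p * (H i₀ ⊔ W).index := mul_comm _ _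
        _ ≤ (H i₀).relIndex (H i₀ ⊔ W) * (H i₀ ⊔ W).index := Nat.mul_le_mul_right _ hp_le
        _ = (H i₀).index := hmul
    -- the new faithful family with two pieces replacing orbit i₀
    set K : Bool → Subgroup G := fun b => H i₀ ⊔ (if b then W₁ else W₂) with hKdef
    have hKW : ∀ b : Bool, Ω ⊓ K b = (if b then W₁ else W₂) := by
      intro b
      cases b
      · exact hded W₂ (le_of_lt hMW₂) hW₂Ω
      · exact hded W₁ (le_of_lt hMW₁) hW₁Ω
    set Kfam : ({j : ι // j ≠ i₀} ⊕ Bool) → Subgroup G :=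
      Sum.elim (fun j => H j.1) K with hKfamdef
    have hker : ∀ g : G, (∀ (j : {j : ι // j ≠ i₀} ⊕ Bool) (x : G ⧸ Kfam j), g • x = x) →
        g = 1 := by
      intro g hg
      have hNnormal : (⨅ j, (Kfam j).normalCore).Normal := by
        constructor
        intro x hx gg
        rw [Subgroup.mem_iInf] at hx ⊢
        intro j
        exact ((Kfam j).normalCore_normal).conj_mem x (hx j) gg
      have hgN : g ∈ ⨅ j, (Kfam j).normalCore := by
        rw [Subgroup.mem_iInf]
        intro j
        rw [Subgroup.normalCore_eq_ker]
        show MulAction.toPermHom G (G ⧸ Kfam j) g = 1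
        apply Equiv.ext
        intro x
        simpa using hg j x
      have hNbot : (⨅ j, (Kfam j).normalCore) = ⊥ := by
        by_contra hne
        obtain ⟨z, hzN, hzΩ, hz1⟩ := Johnson.exists_omega_mem hp hpG hNnormal hne
        apply hz1
        rw [Subgroup.mem_iInf] at hzN
        have hzM : z ∈ M i₀ := by
          rw [← hW12]
          have h1 : z ∈ Ω ⊓ K true := Subgroup.mem_inf.mpr
            ⟨hzΩ, (Kfam (Sum.inr true)).normalCore_le (hzN (Sum.inr true))⟩
          have h2 : z ∈ Ω ⊓ K false := Subgroup.mem_inf.mpr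
            ⟨hzΩ, (Kfam (Sum.inr false)).normalCore_le (hzN (Sum.inr false))⟩
          rw [hKW true] at h1
          rw [hKW false] at h2
          simp only [if_true, if_false] at h1 h2
          exact Subgroup.mem_inf.mpr ⟨h1, h2⟩
        have hzall : z ∈ ⨅ o : ι, M o := by
          rw [Subgroup.mem_iInf]
          intro j
          by_cases hji : j = i₀
          · rw [hji]; exact hzM
          · exact Subgroup.mem_inf.mpr
              ⟨hzΩ, (Kfam (Sum.inl ⟨j, hji⟩)).normalCore_le (hzN (Sum.inl ⟨j, hji⟩))⟩
        rw [hMbot] at hzall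
        exact Subgroup.mem_bot.mp hzall
      rw [hNbot] at hgN
      exact Subgroup.mem_bot.mp hgN
    have hle := Johnson.minDeg_le Kfam hker
    rw [Fintype.sum_sum_type] at hle
    have hsumbool : ∑ b : Bool, (Kfam (Sum.inr b)).index
        = (K true).index + (K false).index := by
      rw [Fintype.sum_bool]
      rfl
    have hsumsub : ∑ j : {j : ι // j ≠ i₀}, (Kfam (Sum.inl j)).index
        = ∑ j ∈ Finset.univ.erase i₀, (H j).index := by
      exact (Finset.sum_subtype (Finset.univ.erase i₀)
        (fun x => by simp [Finset.mem_erase]) (fun j => (H j).index)).symm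
    rw [hsumbool, hsumsub] at hle
    have htot : ∑ j ∈ Finset.univ.erase i₀, (H j).index + (H i₀).index = ∑ j : ι, (H j).index :=
      Finset.sum_erase_add _ _ (Finset.mem_univ i₀)
    have hi1 : (K true).index * p ≤ (H i₀).index := by
      have := hidx W₁ hMW₁ hW₁Ω
      simpa [hKdef] using this
    have hi2 : (K false).index * p ≤ (H i₀).index := by
      have := hidx W₂ hMW₂ hW₂Ω
      simpa [hKdef] using this
    have hKpos : (K true).index ≠ 0 := Subgroup.index_ne_zero_of_finite
    have hKpos2 : (K false).index ≠ 0 := Subgroup.index_ne_zero_of_finite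
    have hlt : (K true).index + (K false).index < (H i₀).index := by
      nlinarith [hi1, hi2, Nat.pos_of_ne_zero hKpos, Nat.pos_of_ne_zero hKpos2]
    rw [← hn] at hle
    omega
  -- counting: d ≤ number of orbits
  have hdle : d ≤ Fintype.card ι := by
    have h1 := Subgroup.relIndex_iInf_le (L := Ω) M
    rw [hMbot, Subgroup.relIndex_bot_left, hcardΩ] at h1
    have h2 : ∏ o : ι, (M o).relIndex Ω ≤ ∏ _o : ι, p :=
      Finset.prod_le_prod' (fun i _ => hrel i)
    rw [Finset.prod_const, Finset.card_univ] at h2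
    exact (Nat.pow_le_pow_iff_right hp.one_lt).mp (le_trans h1 h2)
  -- counting: number of orbits ≤ d
  have hled : Fintype.card ι ≤ d := by
    rcases isEmpty_or_nonempty ι with hempty | hnonempty
    · simp [Fintype.card_eq_zero]
    set ℓ := Fintype.card ι with hℓdef
    set e := Fintype.equivFin ι with hedef
    set N : ℕ → Subgroup G := fun k => Ω ⊓ ⨅ (j : ι) (_ : (e j : ℕ) < k), M j with hNdef
    have hN0 : N 0 = Ω := by
      rw [hNdef]
      simp
    have hNl : N ℓ = ⊥ := by
      have h2 : (⨅ (j : ι) (_ : (e j : ℕ) < ℓ), M j) = ⨅ j : ι, M j :=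
        iInf_congr fun j => iInf_pos (e j).isLt
      show Ω ⊓ (⨅ (j : ι) (_ : (e j : ℕ) < ℓ), M j) = ⊥
      rw [h2, hMbot, inf_bot_eq]
    have hstep : ∀ k, k < ℓ → Nat.card (N (k+1)) * p ≤ Nat.card (N k) := by
      intro k hk
      set i₀ := e.symm ⟨k, hk⟩ with hi₀def
      have hsub : N (k+1) ≤ N k := by
        refine inf_le_inf le_rfl ?_
        refine le_iInf fun j => le_iInf fun hj => ?_
        exact iInf_le_of_le j (iInf_le _ (Nat.lt_succ_of_lt hj))
      have hne : N (k+1) ≠ N k := by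
        intro heq
        have h1 : N (k+1) ≤ M i₀ := by
          refine le_trans inf_le_right ?_
          refine iInf_le_of_le i₀ (iInf_le _ ?_)
          show (e i₀ : ℕ) < k + 1
          rw [hi₀def, Equiv.apply_symm_apply]
          exact Nat.lt_succ_self k
        rw [heq] at h1
        apply hE i₀
        rw [eq_bot_iff, ← hMbot]
        refine le_iInf fun j => ?_
        by_cases hji : j = i₀
        · rw [hji]
          refine le_trans ?_ h1
          rw [hNdef]
          refine le_inf inf_le_left ?_
          refine le_iInf fun j' => le_iInf fun hj' => ?_
          have hji' : j' ≠ i₀ := by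
            intro hcon
            rw [hcon, hi₀def, Equiv.apply_symm_apply] at hj'
            exact lt_irrefl k hj'
          exact le_trans inf_le_right (iInf_le (fun j : {j : ι // j ≠ i₀} => M j.1) ⟨j', hji'⟩)
        · exact le_trans inf_le_right (iInf_le (fun j : {j : ι // j ≠ i₀} => M j.1) ⟨j, hji⟩)
      obtain ⟨r, hr⟩ := Subgroup.card_dvd_of_le hsub
      have hrne : r ≠ 1 := by
        intro h1
        rw [h1, mul_one] at hr
        exact hne (heqcard _ _ hsub (le_of_eq hr))
      have hrdvd : r ∣ p ^ s := by
        have h1 : Nat.card (N k) ∣ p ^ s := by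
          rw [← hcardG]
          exact Subgroup.card_subgroup_dvd_card _
        exact dvd_trans (Dvd.intro_left _ hr.symm) h1
      obtain ⟨t, htle, hteq⟩ := (Nat.dvd_prime_pow hp).mp hrdvd
      have hpr : p ≤ r := by
        rcases Nat.eq_zero_or_pos t with rfl | ht
        · rw [hteq, pow_zero] at hrne; omega
        · calc p = p ^ 1 := (pow_one p).symm
            _ ≤ p ^ t := Nat.pow_le_pow_right hp.pos ht
            _ = r := hteq.symm
      calc Nat.card (N (k+1)) * p ≤ Nat.card (N (k+1)) * r := Nat.mul_le_mul_left _ hpr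
        _ = Nat.card (N k) := hr.symm
    have hiter : ∀ k, k ≤ ℓ → Nat.card (N k) * p ^ k ≤ p ^ d := by
      intro k
      induction k with
      | zero =>
        intro _
        rw [hN0, pow_zero, mul_one, hcardΩ]
      | succ k ih =>
        intro hk1
        have hk : k < ℓ := hk1
        calc Nat.card (N (k+1)) * p ^ (k+1) = (Nat.card (N (k+1)) * p) * p ^ k := by ring
          _ ≤ Nat.card (N k) * p ^ k := Nat.mul_le_mul_right _ (hstep k hk)
          _ ≤ p ^ d := ih (le_of_lt hk)
    have hfin := hiter ℓ le_rfl
    rw [hNl, Subgroup.card_bot, one_mul] at hfin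
    exact (Nat.pow_le_pow_iff_right hp.one_lt).mp hfin
  have hcount : Nat.card ι = d := by
    rw [Nat.card_eq_fintype_card]
    omega
  refine ⟨hcount, ?_⟩
  intro hcyc
  obtain ⟨g, hg⟩ := IsCyclic.exists_generator (α := Subgroup.center G)
  have hd1 : d ≤ 1 := by
    rw [← hd]
    have hclos : Subgroup.closure (({g} : Finset (Subgroup.center G)) : Set (Subgroup.center G)) = ⊤ := by
      rw [Finset.coe_singleton, ← Subgroup.zpowers_eq_closure, eq_top_iff]
      exact fun x _ => hg x
    have := Group.rank_le hclos
    simpa using this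
  haveI : Subsingleton ι := by
    apply Fintype.card_le_one_iff_subsingleton.mp
    omega
  constructor
  intro x y
  have hxy : (Quotient.mk (MulAction.orbitRel G (Fin n)) x)
      = Quotient.mk (MulAction.orbitRel G (Fin n)) y := Subsingleton.elim _ _
  have hrel' : x ∈ MulAction.orbit G y := Quotient.exact hxy
  obtain ⟨g', hg'⟩ := MulAction.mem_orbit_iff.mp hrel'
  exact ⟨g'⁻¹, by rw [← hg', inv_smul_smul]⟩
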